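/- Let α ∈ (0,1) and let g : ℝ^d → ℝ^d satisfy a global Lipschitz condition with constant L > 0. For τ ≥ 0 and continuous f : ℝ₊ → ℝ^d define (T_τ f)(θ) = f(τ + θ) + (1/Γ(α)) ∫₀^τ (τ + θ − s)^{α−1} g(x_f(s)) ds, where x_f is the unique continuous global solution of x_f(t) = f(t) + (1/Γ(α)) ∫₀ᵗ (t−s)^{α−1} g(x_f(s)) ds. Then the family {T_τ : τ ≥ 0} satisfies the semigroup property: T_{σ+τ} f = T_σ(T_τ f) for all σ, τ ≥ 0 and all continuous f : ℝ₊ → ℝ^d, and T_0 f = f. -/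

import Mathlib

open Real MeasureTheory Set

section Aux
open intervalIntegral
variable {E : Type*} [NormedAddCommGroup E] [NormedSpace ℝ E]

/-- Integrability of the singular kernel times a continuous function. -/
lemma kernII {α : ℝ} (hα : α ∈ Set.Ioo (0:ℝ) 1) {a t b : ℝ} (hat : a ≤ t) (htb : t ≤ b)
    {φ : ℝ → E} (hφ : ContinuousOn φ (Icc a t)) :
    IntervalIntegrable (fun s => ((b - s) ^ (α - 1)) • φ s) volume a t := by
  have h1 : IntervalIntegrable (fun x : ℝ => x ^ (α - 1)) volume (b - t) (b - a) :=
    intervalIntegrable_rpow' (by linarith [hα.1])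
  have h2 := h1.comp_sub_left b
  simp only [sub_sub_cancel] at h2
  replace h2 := h2.symm
  rw [intervalIntegrable_iff_integrableOn_Icc_of_le hat] at h2 ⊢
  exact h2.smul_continuousOn hφ isCompact_Icc

lemma kernel_exp_bound {α lam t : ℝ} (hα : α ∈ Set.Ioo (0:ℝ) 1) (hlam : 0 < lam) (ht : 0 ≤ t) :
    ∫ s in (0:ℝ)..t, (t - s) ^ (α - 1) * Real.exp (lam * s) ≤
      Real.exp (lam * t) * ((1 / lam) ^ α * Real.Gamma α) := by
  have key : ∫ s in (0:ℝ)..t, (t - s) ^ (α - 1) * Real.exp (lam * s) =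
      Real.exp (lam * t) * ∫ u in (0:ℝ)..t, u ^ (α - 1) * Real.exp (-(lam * u)) := by
    have h1 : ∫ s in (0:ℝ)..t, (t - s) ^ (α - 1) * Real.exp (lam * s) =
        ∫ s in (0:ℝ)..t, (fun u => u ^ (α - 1) * Real.exp (lam * (t - u))) (t - s) := by
      refine intervalIntegral.integral_congr fun s _ => ?_
      simp only
      rw [show t - (t - s) = s by ring]
    rw [h1, intervalIntegral.integral_comp_sub_left (fun u => u ^ (α - 1) * Real.exp (lam * (t - u))) t]
    rw [sub_self, sub_zero, ← intervalIntegral.integral_const_mul]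
    refine intervalIntegral.integral_congr fun u _ => ?_
    rw [show lam * (t - u) = lam * t + -(lam * u) by ring, Real.exp_add]
    ring
  rw [key]
  have hIoi : IntegrableOn (fun u : ℝ => u ^ (α - 1) * Real.exp (-(lam * u))) (Ioi 0) := by
    have := integrableOn_rpow_mul_exp_neg_mul_rpow (p := 1) (s := α - 1) (b := lam)
      (by linarith [hα.1]) zero_lt_one hlam
    simpa [Real.rpow_one, neg_mul] using this
  have hval : ∫ u in Ioi (0:ℝ), u ^ (α - 1) * Real.exp (-(lam * u)) = (1 / lam) ^ α * Real.Gamma α :=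
    integral_rpow_mul_exp_neg_mul_Ioi hα.1 hlam
  have hmono : ∫ u in (0:ℝ)..t, u ^ (α - 1) * Real.exp (-(lam * u)) ≤
      ∫ u in Ioi (0:ℝ), u ^ (α - 1) * Real.exp (-(lam * u)) := by
    rw [intervalIntegral.integral_of_le ht]
    refine setIntegral_mono_set hIoi ?_ (HasSubset.Subset.eventuallyLE Ioc_subset_Ioi_self)
    filter_upwards [ae_restrict_mem measurableSet_Ioi] with u hu
    have : (0:ℝ) ≤ u ^ (α - 1) := Real.rpow_nonneg (le_of_lt hu) _
    positivity
  rw [← hval]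
  exact mul_le_mul_of_nonneg_left hmono (Real.exp_nonneg _)

lemma volterra_uniq {α L : ℝ} (hα : α ∈ Set.Ioo (0:ℝ) 1) (hL : 0 < L)
    {g : E → E} (hg : ∀ x y : E, ‖g x - g y‖ ≤ L * ‖x - y‖)
    {h y z : ℝ → E}
    (hy : ContinuousOn y (Ici 0)) (hz : ContinuousOn z (Ici 0))
    (hyeq : ∀ t, 0 ≤ t → y t = h t + (1 / Real.Gamma α) •
      ∫ s in (0:ℝ)..t, ((t - s) ^ (α - 1)) • g (y s))
    (hzeq : ∀ t, 0 ≤ t → z t = h t + (1 / Real.Gamma α) •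
      ∫ s in (0:ℝ)..t, ((t - s) ^ (α - 1)) • g (z s)) :
    ∀ t, 0 ≤ t → y t = z t := by
  have hΓ : 0 < Real.Gamma α := Real.Gamma_pos_of_pos hα.1
  have hgc : Continuous g := by
    have : LipschitzWith (Real.toNNReal L) g := by
      refine LipschitzWith.of_dist_le_mul fun x y => ?_
      rw [dist_eq_norm, dist_eq_norm, Real.coe_toNNReal L hL.le]
      exact hg x y
    exact this.continuous
  intro T hT
  set lam : ℝ := (2 * L) ^ (α⁻¹) with hlamdef
  have hlam : 0 < lam := Real.rpow_pos_of_pos (by linarith) _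
  have hlamα : (1 / lam) ^ α = 1 / (2 * L) := by
    rw [Real.div_rpow zero_le_one hlam.le, Real.one_rpow, hlamdef,
      ← Real.rpow_mul (by linarith : (0:ℝ) ≤ 2 * L), inv_mul_cancel₀ (ne_of_gt hα.1),
      Real.rpow_one]
  set w : ℝ → ℝ := fun t => ‖y t - z t‖ with hwdef
  have hwc : ContinuousOn w (Icc 0 T) :=
    ((hy.mono (Icc_subset_Ici_self)).sub (hz.mono (Icc_subset_Ici_self))).norm
  set φ : ℝ → ℝ := fun t => Real.exp (-(lam * t)) * w t with hφdef
  have hφc : ContinuousOn φ (Icc 0 T) :=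
    (Real.continuous_exp.comp (continuous_const.mul continuous_id).neg).continuousOn.mul hwc
  obtain ⟨t₀, ht₀, hmax⟩ := isCompact_Icc.exists_isMaxOn (nonempty_Icc.mpr hT) hφc
  set M : ℝ := φ t₀ with hMdef
  have hM0 : 0 ≤ M := mul_nonneg (Real.exp_nonneg _) (norm_nonneg _)
  -- key estimate
  have hkey : ∀ t ∈ Icc (0:ℝ) T, w t ≤
      (1 / Real.Gamma α) * ((L * M) * (Real.exp (lam * t) * ((1 / lam) ^ α * Real.Gamma α))) := by
    intro t htT
    obtain ⟨ht0, htle⟩ := htT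
    have hyint : IntervalIntegrable (fun s => ((t - s) ^ (α - 1)) • g (y s)) volume 0 t :=
      kernII hα ht0 le_rfl ((hgc.comp_continuousOn (hy.mono (Icc_subset_Ici_self))))
    have hzint : IntervalIntegrable (fun s => ((t - s) ^ (α - 1)) • g (z s)) volume 0 t :=
      kernII hα ht0 le_rfl ((hgc.comp_continuousOn (hz.mono (Icc_subset_Ici_self))))
    have hdiff : y t - z t = (1 / Real.Gamma α) •
        ∫ s in (0:ℝ)..t, ((t - s) ^ (α - 1)) • (g (y s) - g (z s)) := by
      rw [hyeq t ht0, hzeq t ht0]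
      rw [show ∀ a b c : E, a + b - (a + c) = b - c from fun a b c => by abel]
      rw [← smul_sub, ← intervalIntegral.integral_sub hyint hzint]
      congr 1
      refine intervalIntegral.integral_congr fun s _ => ?_
      simp [smul_sub]
    have hbound : ‖∫ s in (0:ℝ)..t, ((t - s) ^ (α - 1)) • (g (y s) - g (z s))‖ ≤
        |∫ s in (0:ℝ)..t, (t - s) ^ (α - 1) * ((L * M) * Real.exp (lam * s))| := by
      refine intervalIntegral.norm_integral_le_abs_of_norm_le ?_ ?_
      · rw [uIoc_of_le ht0]
        filter_upwards [ae_restrict_mem measurableSet_Ioc] with s hs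
        have hs0 : (0:ℝ) ≤ s := hs.1.le
        have hst : s ≤ t := hs.2
        have hk0 : (0:ℝ) ≤ (t - s) ^ (α - 1) := Real.rpow_nonneg (by linarith) _
        rw [norm_smul, Real.norm_eq_abs, abs_of_nonneg hk0]
        refine mul_le_mul_of_nonneg_left ?_ hk0
        calc ‖g (y s) - g (z s)‖ ≤ L * w s := hg _ _
          _ ≤ L * (M * Real.exp (lam * s)) := by
              refine mul_le_mul_of_nonneg_left ?_ hL.le
              have hφs : φ s ≤ M := hmax ⟨hs0, hst.trans htle⟩
              have : w s = Real.exp (lam * s) * φ s := by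
                rw [hφdef]
                simp only
                rw [← mul_assoc, ← Real.exp_add]
                simp
              rw [this]
              calc Real.exp (lam * s) * φ s ≤ Real.exp (lam * s) * M :=
                    mul_le_mul_of_nonneg_left hφs (Real.exp_nonneg _)
                _ = M * Real.exp (lam * s) := mul_comm _ _
          _ = (L * M) * Real.exp (lam * s) := by ring
      · have := kernII (E := ℝ) hα ht0 (le_refl t)
          (φ := fun s => (L * M) * Real.exp (lam * s))
          (continuous_const.mul (Real.continuous_exp.comp (continuous_const.mul continuous_id))).continuousOn
        simpa [smul_eq_mul] using this
    have habs : |∫ s in (0:ℝ)..t, (t - s) ^ (α - 1) * ((L * M) * Real.exp (lam * s))| ≤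
        (L * M) * (Real.exp (lam * t) * ((1 / lam) ^ α * Real.Gamma α)) := by
      have hnn : 0 ≤ ∫ s in (0:ℝ)..t, (t - s) ^ (α - 1) * ((L * M) * Real.exp (lam * s)) := by
        refine intervalIntegral.integral_nonneg ht0 fun u hu => ?_
        have : (0:ℝ) ≤ (t - u) ^ (α - 1) := Real.rpow_nonneg (by linarith [hu.2]) _
        have := Real.exp_nonneg (lam * u)
        positivity
      rw [abs_of_nonneg hnn]
      have : ∫ s in (0:ℝ)..t, (t - s) ^ (α - 1) * ((L * M) * Real.exp (lam * s)) =
          (L * M) * ∫ s in (0:ℝ)..t, (t - s) ^ (α - 1) * Real.exp (lam * s) := by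
        rw [← intervalIntegral.integral_const_mul]
        exact intervalIntegral.integral_congr fun s _ => by ring
      rw [this]
      exact mul_le_mul_of_nonneg_left (kernel_exp_bound hα hlam ht0)
        (mul_nonneg hL.le hM0)
    calc w t = ‖y t - z t‖ := rfl
      _ = (1 / Real.Gamma α) * ‖∫ s in (0:ℝ)..t, ((t - s) ^ (α - 1)) • (g (y s) - g (z s))‖ := by
          rw [hdiff, norm_smul, Real.norm_eq_abs, abs_of_nonneg (by positivity)]
      _ ≤ (1 / Real.Gamma α) * ((L * M) * (Real.exp (lam * t) * ((1 / lam) ^ α * Real.Gamma α))) := by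
          refine mul_le_mul_of_nonneg_left (hbound.trans habs) (by positivity)
  -- deduce M ≤ M / 2
  have hM2 : M ≤ M / 2 := by
    have := hkey t₀ ht₀
    have hsimp : (1 / Real.Gamma α) * ((L * M) * (Real.exp (lam * t₀) * ((1 / lam) ^ α * Real.Gamma α)))
        = Real.exp (lam * t₀) * (M / 2) := by
      rw [hlamα]
      field_simp
    rw [hsimp] at this
    have : M = Real.exp (-(lam * t₀)) * w t₀ := rfl
    calc M = Real.exp (-(lam * t₀)) * w t₀ := rfl
      _ ≤ Real.exp (-(lam * t₀)) * (Real.exp (lam * t₀) * (M / 2)) :=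
          mul_le_mul_of_nonneg_left (hkey t₀ ht₀ |>.trans_eq hsimp) (Real.exp_nonneg _)
      _ = M / 2 := by rw [← mul_assoc, ← Real.exp_add]; simp
  have hM : M = 0 := le_antisymm (by linarith) hM0
  -- conclude
  have hwT : w T = 0 := by
    have hφT : φ T ≤ 0 := hM ▸ hmax ⟨hT, le_rfl⟩
    have hφT' : 0 ≤ φ T := mul_nonneg (Real.exp_nonneg _) (norm_nonneg _)
    have : φ T = 0 := le_antisymm hφT hφT'
    have hexp : Real.exp (-(lam * T)) ≠ 0 := Real.exp_ne_zero _
    have := mul_eq_zero.mp this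
    tauto
  have := norm_eq_zero.mp hwT
  exact sub_eq_zero.mp this

lemma contT {α τ : ℝ} (hα : α ∈ Set.Ioo (0:ℝ) 1) (hτ : 0 ≤ τ)
    {f ψ : ℝ → E} (hf : ContinuousOn f (Ici 0)) (hψ : ContinuousOn ψ (Ici 0)) :
    ContinuousOn (fun θ => f (τ + θ) + (1 / Real.Gamma α) •
      ∫ s in (0:ℝ)..τ, ((τ + θ - s) ^ (α - 1)) • ψ s) (Ici 0) := by
  obtain ⟨C, hC⟩ := isCompact_Icc.exists_bound_of_continuousOn (hψ.mono (Icc_subset_Ici_self : Icc (0:ℝ) τ ⊆ Ici 0))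
  refine ContinuousOn.add ?_ (ContinuousOn.const_smul ?_ _)
  · exact hf.comp (continuous_const.add continuous_id).continuousOn
      (fun θ hθ => by simpa using add_nonneg hτ hθ)
  · intro θ₀ hθ₀
    have hne : ∀ᵐ s : ℝ, s ≠ τ := by
      refine ae_iff.mpr ?_
      have : {a : ℝ | ¬a ≠ τ} = {τ} := by ext x; simp
      rw [this]
      exact Real.volume_singleton
    refine intervalIntegral.tendsto_integral_filter_of_dominated_convergence
      (fun s => ((τ - s) ^ (α - 1)) * C) ?_ ?_ ?_ ?_
    · refine Filter.Eventually.of_forall fun θ => ?_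
      refine AEStronglyMeasurable.smul ?_ ?_
      · exact ((measurable_const.sub measurable_id).pow measurable_const).aestronglyMeasurable
      · rw [uIoc_of_le hτ]
        exact (hψ.mono (fun x hx => hx.1.le)).aestronglyMeasurable measurableSet_Ioc
    · filter_upwards [self_mem_nhdsWithin] with θ (hθ : θ ∈ Ici (0:ℝ))
      filter_upwards [hne] with s hsne hs
      rw [uIoc_of_le hτ] at hs
      have hsτ : s < τ := lt_of_le_of_ne hs.2 hsne
      have h1 : (0:ℝ) < τ - s := by linarith
      have h2 : τ - s ≤ τ + θ - s := by have := mem_Ici.mp hθ; linarith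
      have hk : (τ + θ - s) ^ (α - 1) ≤ (τ - s) ^ (α - 1) :=
        Real.rpow_le_rpow_of_nonpos h1 h2 (by linarith [hα.2])
      have hk0 : (0:ℝ) ≤ (τ + θ - s) ^ (α - 1) := Real.rpow_nonneg (by linarith) _
      rw [norm_smul, Real.norm_eq_abs, abs_of_nonneg hk0]
      exact mul_le_mul hk (hC s ⟨hs.1.le, hs.2⟩) (norm_nonneg _) (Real.rpow_nonneg h1.le _)
    · have := kernII (E := ℝ) hα hτ (le_refl τ) (φ := fun _ => C) continuousOn_const
      simpa [smul_eq_mul] using this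
    · filter_upwards [hne] with s hsne hs
      rw [uIoc_of_le hτ] at hs
      have hsτ : s < τ := lt_of_le_of_ne hs.2 hsne
      have hbase : τ + θ₀ - s ≠ 0 := by have := mem_Ici.mp hθ₀; intro h; nlinarith
      have hca : ContinuousAt (fun θ : ℝ => ((τ + θ - s) ^ (α - 1)) • ψ s) θ₀ := by
        refine ContinuousAt.smul ?_ continuousAt_const
        exact (ContinuousAt.rpow_const (by fun_prop) (Or.inl hbase))
      exact hca.tendsto.mono_left nhdsWithin_le_nhds

lemma shift_split {α : ℝ} (hα : α ∈ Set.Ioo (0:ℝ) 1) {τ t b : ℝ} (hτ : 0 ≤ τ) (ht : 0 ≤ t)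
    (hb : τ + t ≤ b) {ψ : ℝ → E} (hψ : ContinuousOn ψ (Ici 0)) :
    ∫ s in (0:ℝ)..(τ + t), ((b - s) ^ (α - 1)) • ψ s
      = (∫ s in (0:ℝ)..τ, ((b - s) ^ (α - 1)) • ψ s)
        + ∫ v in (0:ℝ)..t, ((b - (τ + v)) ^ (α - 1)) • ψ (τ + v) := by
  have h1 : IntervalIntegrable (fun s => ((b - s) ^ (α - 1)) • ψ s) volume 0 τ :=
    kernII hα hτ (by linarith) (hψ.mono Icc_subset_Ici_self)
  have h2 : IntervalIntegrable (fun s => ((b - s) ^ (α - 1)) • ψ s) volume τ (τ + t) :=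
    kernII hα (by linarith) hb (hψ.mono (fun x hx => le_trans hτ hx.1))
  rw [← intervalIntegral.integral_add_adjacent_intervals h1 h2]
  congr 1
  have := intervalIntegral.integral_comp_add_left (a := (0:ℝ)) (b := t)
    (fun s => ((b - s) ^ (α - 1)) • ψ s) τ
  rw [add_zero] at this
  rw [← this]

end Aux

/-- The operator `(T_τ f)(θ) = f(τ+θ) + (1/Γ(α)) ∫₀^τ (τ+θ−s)^{α−1} g(x_f(s)) ds`,
where `sol f = x_f` is the solution operator. -/
noncomputable def semigroupOp {d : ℕ} (α : ℝ)
    (g : EuclideanSpace ℝ (Fin d) → EuclideanSpace ℝ (Fin d))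
    (sol : (ℝ → EuclideanSpace ℝ (Fin d)) → ℝ → EuclideanSpace ℝ (Fin d))
    (τ : ℝ) (f : ℝ → EuclideanSpace ℝ (Fin d)) :
    ℝ → EuclideanSpace ℝ (Fin d) :=
  fun θ => f (τ + θ) + (1 / Real.Gamma α) •
    ∫ s in (0:ℝ)..τ, ((τ + θ - s) ^ (α - 1)) • g (sol f s)

theorem stmt12 {d : ℕ} (α : ℝ) (hα : α ∈ Set.Ioo (0:ℝ) 1)
    (g : EuclideanSpace ℝ (Fin d) → EuclideanSpace ℝ (Fin d))
    (L : ℝ) (hL : 0 < L)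
    (hg : ∀ x y : EuclideanSpace ℝ (Fin d), ‖g x - g y‖ ≤ L * ‖x - y‖)
    (sol : (ℝ → EuclideanSpace ℝ (Fin d)) → ℝ → EuclideanSpace ℝ (Fin d))
    (hsol : ∀ f : ℝ → EuclideanSpace ℝ (Fin d), ContinuousOn f (Set.Ici 0) →
      ContinuousOn (sol f) (Set.Ici 0) ∧
      ∀ t : ℝ, 0 ≤ t →
        sol f t = f t + (1 / Real.Gamma α) •
          ∫ s in (0:ℝ)..t, ((t - s) ^ (α - 1)) • g (sol f s)) :
    (∀ σ τ : ℝ, 0 ≤ σ → 0 ≤ τ →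
      ∀ f : ℝ → EuclideanSpace ℝ (Fin d), ContinuousOn f (Set.Ici 0) →
        ∀ θ : ℝ, 0 ≤ θ →
          semigroupOp α g sol (σ + τ) f θ =
            semigroupOp α g sol σ (semigroupOp α g sol τ f) θ) ∧
    (∀ f : ℝ → EuclideanSpace ℝ (Fin d), ContinuousOn f (Set.Ici 0) →
      ∀ θ : ℝ, 0 ≤ θ → semigroupOp α g sol 0 f θ = f θ) := by
  have hgc : Continuous g := by
    have : LipschitzWith (Real.toNNReal L) g := by
      refine LipschitzWith.of_dist_le_mul fun x y => ?_
      rw [dist_eq_norm, dist_eq_norm, Real.coe_toNNReal L hL.le]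
      exact hg x y
    exact this.continuous
  constructor
  · intro σ τ hσ hτ f hf θ hθ
    obtain ⟨hxc, hxeq⟩ := hsol f hf
    set ψ : ℝ → EuclideanSpace ℝ (Fin d) := fun s => g (sol f s) with hψdef
    have hψc : ContinuousOn ψ (Ici 0) := hgc.comp_continuousOn hxc
    set F := semigroupOp α g sol τ f with hFdef
    have hFc : ContinuousOn F (Ici 0) := contT hα hτ hf hψc
    obtain ⟨hzc, hzeq⟩ := hsol F hFc
    have hyc : ContinuousOn (fun s => sol f (τ + s)) (Ici 0) :=
      hxc.comp (continuous_const.add continuous_id).continuousOn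
        (fun s hs => by simpa using add_nonneg hτ hs)
    have hyeq : ∀ t, 0 ≤ t → sol f (τ + t) = F t + (1 / Real.Gamma α) •
        ∫ v in (0:ℝ)..t, ((t - v) ^ (α - 1)) • g (sol f (τ + v)) := by
      intro t ht
      have e2 : (∫ v in (0:ℝ)..t, ((τ + t - (τ + v)) ^ (α - 1)) • ψ (τ + v)) =
          ∫ v in (0:ℝ)..t, ((t - v) ^ (α - 1)) • g (sol f (τ + v)) := by
        refine intervalIntegral.integral_congr fun v _ => ?_
        rw [show τ + t - (τ + v) = t - v by ring]
      rw [hxeq (τ + t) (add_nonneg hτ ht), shift_split hα hτ ht le_rfl hψc, e2, smul_add,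
        ← add_assoc]
      rfl
    have huniq : ∀ t, 0 ≤ t → sol f (τ + t) = sol F t :=
      volterra_uniq hα hL hg hyc hzc hyeq hzeq
    -- now compute
    show f ((σ + τ) + θ) + (1 / Real.Gamma α) •
        (∫ s in (0:ℝ)..(σ + τ), (((σ + τ) + θ - s) ^ (α - 1)) • ψ s) =
      F (σ + θ) + (1 / Real.Gamma α) •
        ∫ s in (0:ℝ)..σ, ((σ + θ - s) ^ (α - 1)) • g (sol F s)
    have step1 : (∫ s in (0:ℝ)..σ, ((σ + θ - s) ^ (α - 1)) • g (sol F s)) =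
        ∫ s in (0:ℝ)..σ, (((σ + τ) + θ - (τ + s)) ^ (α - 1)) • ψ (τ + s) := by
      refine intervalIntegral.integral_congr fun s hs => ?_
      rw [uIcc_of_le hσ] at hs
      rw [← huniq s hs.1, show (σ + τ) + θ - (τ + s) = σ + θ - s by ring]
    have step2 : (∫ s in (0:ℝ)..(σ + τ), (((σ + τ) + θ - s) ^ (α - 1)) • ψ s) =
        (∫ s in (0:ℝ)..τ, (((σ + τ) + θ - s) ^ (α - 1)) • ψ s) +
          ∫ v in (0:ℝ)..σ, (((σ + τ) + θ - (τ + v)) ^ (α - 1)) • ψ (τ + v) := by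
      rw [show σ + τ = τ + σ from add_comm σ τ]
      exact shift_split hα hτ hσ (by linarith) hψc
    have step3 : F (σ + θ) = f ((σ + τ) + θ) + (1 / Real.Gamma α) •
        ∫ s in (0:ℝ)..τ, (((σ + τ) + θ - s) ^ (α - 1)) • ψ s := by
      show f (τ + (σ + θ)) + (1 / Real.Gamma α) •
          (∫ s in (0:ℝ)..τ, ((τ + (σ + θ) - s) ^ (α - 1)) • ψ s) = _
      rw [show τ + (σ + θ) = (σ + τ) + θ by ring]
    rw [step1, step2, step3, smul_add]
    abel
  · intro f hf θ hθ
    show f (0 + θ) + (1 / Real.Gamma α) • (∫ s in (0:ℝ)..0, _) = f θ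
    rw [intervalIntegral.integral_same, smul_zero, add_zero, zero_add]
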